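/- arXiv:1410.0559 — 2 statements merged into one kernel-verified Lean document; each statement's English description precedes it below -/
import Mathlib

section
/- Let X be a subspace of 2^ω such that h_q[X] = X for every eventually constant q ∈ 2^ω (where h_q(x) = x + q mod 2). Then X is a homogeneous topological space: for every pair x, y ∈ X there is a homeomorphism of X onto itself mapping x to y. -/
open Filter Topology Classical

/-- The auxiliary homeomorphism of `2^ω`: on the clopen set of `w` whose first
disagreement with `x` is at coordinate `n`, translate by `x + y` truncated at `n`;
send `x` itself to `y`. -/
noncomputable def Fmap (x y w : ℕ → Bool) : ℕ → Bool :=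
  if h : w = x then y
  else fun k =>
    xor (w k) (if k ≤ Nat.find (Function.ne_iff.mp h) then xor (x k) (y k) else false)

open Classical in
lemma Fmap_self (x y : ℕ → Bool) : Fmap x y x = y := dif_pos rfl

open Classical in
lemma Fmap_apply (x y w : ℕ → Bool) (h : w ≠ x) (k : ℕ) :
    Fmap x y w k =
      xor (w k) (if k ≤ Nat.find (Function.ne_iff.mp h) then xor (x k) (y k) else false) := by
  rw [Fmap, dif_neg h]

lemma Fmap_inv (x y w : ℕ → Bool) : Fmap y x (Fmap x y w) = w := by
  by_cases h : w = x
  · subst h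
    rw [Fmap_self, Fmap_self]
  · set n := Nat.find (Function.ne_iff.mp h) with hn
    have hspec : w n ≠ x n := Nat.find_spec (Function.ne_iff.mp h)
    have hmin : ∀ k < n, w k = x k := fun k hk => by
      have := Nat.find_min (Function.ne_iff.mp h) hk
      simpa using this
    set v := Fmap x y w with hv
    have hvk : ∀ k, v k = xor (w k) (if k ≤ n then xor (x k) (y k) else false) :=
      fun k => Fmap_apply x y w h k
    have hvn : v n ≠ y n := by
      have := hvk n
      simp only [le_refl, if_true] at this
      revert hspec
      rw [this]
      cases w n <;> cases x n <;> cases y n <;> simp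
    have h' : v ≠ y := Function.ne_iff.mpr ⟨n, hvn⟩
    have hfind : Nat.find (Function.ne_iff.mp h') = n := by
      rw [Nat.find_eq_iff]
      refine ⟨hvn, fun k hk => ?_⟩
      simp only [not_not]
      have := hvk k
      rw [hmin k hk] at this
      rw [this, if_pos (le_of_lt hk)]
      cases x k <;> cases y k <;> simp
    funext k
    rw [Fmap_apply y x v h' k, hfind, hvk k]
    by_cases hk : k ≤ n
    · simp only [hk, if_true]
      cases w k <;> cases x k <;> cases y k <;> simp
    · simp [hk]

lemma eventually_agree (w₀ : ℕ → Bool) (N : ℕ) :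
    ∀ᶠ w in 𝓝 w₀, ∀ i ≤ N, w i = w₀ i := by
  have h1 : ∀ i : ℕ, ∀ᶠ w in 𝓝 w₀, w i = w₀ i := by
    intro i
    have : {b : Bool | b = w₀ i} ∈ 𝓝 (w₀ i) := by
      rw [mem_nhds_discrete]; rfl
    exact (continuous_apply i).continuousAt this
  have h2 : ∀ᶠ w in 𝓝 w₀, ∀ i ∈ Finset.range (N + 1), w i = w₀ i := by
    rw [Filter.eventually_all_finset]
    intro i _
    exact h1 i
  filter_upwards [h2] with w hw i hi
  exact hw i (Finset.mem_range.mpr (Nat.lt_succ_of_le hi))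

lemma Fmap_continuous (x y : ℕ → Bool) : Continuous (Fmap x y) := by
  refine continuous_pi fun k => ?_
  rw [continuous_iff_continuousAt]
  intro w₀
  by_cases h0 : w₀ = x
  · rw [h0]
    have hev : (fun w => Fmap x y w k) =ᶠ[𝓝 x] fun _ => y k := by
      filter_upwards [eventually_agree x k] with w hw
      by_cases h : w = x
      · rw [h, Fmap_self]
      · have hfind := Nat.find_spec (Function.ne_iff.mp h)
        have hk : k ≤ Nat.find (Function.ne_iff.mp h) := by
          by_contra hc
          exact hfind (hw _ (le_of_lt (Nat.lt_of_not_le hc)))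
        rw [Fmap_apply x y w h k]
        simp only [hk, if_true]
        rw [hw k le_rfl]
        cases x k <;> cases y k <;> simp
    exact ContinuousAt.congr continuousAt_const hev.symm
  · set n := Nat.find (Function.ne_iff.mp h0) with hn
    have hspec : w₀ n ≠ x n := Nat.find_spec (Function.ne_iff.mp h0)
    have hmin : ∀ j < n, w₀ j = x j := fun j hj => by
      have := Nat.find_min (Function.ne_iff.mp h0) hj
      simpa using this
    have hcont : ContinuousAt
        (fun w : ℕ → Bool => xor (w k) (if k ≤ n then xor (x k) (y k) else false)) w₀ := by
      exact ((continuous_of_discreteTopology (f := fun b : Bool =>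
        xor b (if k ≤ n then xor (x k) (y k) else false))).comp (continuous_apply k)).continuousAt
    refine hcont.congr ?_
    filter_upwards [eventually_agree w₀ n] with w hw
    have hwx : w ≠ x := by
      intro hc
      exact hspec (by rw [← hw n le_rfl, hc])
    have hfind : Nat.find (Function.ne_iff.mp hwx) = n := by
      rw [Nat.find_eq_iff]
      constructor
      · rw [hw n le_rfl]; exact hspec
      · intro j hj
        simp only [not_not]
        rw [hw j (le_of_lt hj)]
        exact hmin j hj
    rw [Fmap_apply x y w hwx k, hfind]

lemma Fmap_mem (X : Set (ℕ → Bool))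
    (hinv : ∀ q ∈ {x : ℕ → Bool | ∃ m : ℕ, ∀ n ≥ m, x n = x m},
      (fun x : ℕ → Bool => fun n => xor (x n) (q n)) '' X = X)
    {x y : ℕ → Bool} (hy : y ∈ X) (w : ℕ → Bool) (hw : w ∈ X) :
    Fmap x y w ∈ X := by
  by_cases h : w = x
  · rw [h, Fmap_self]; exact hy
  · set n := Nat.find (Function.ne_iff.mp h) with hn
    set q : ℕ → Bool := fun i => if i ≤ n then xor (x i) (y i) else false with hq
    have hqQ : q ∈ {x : ℕ → Bool | ∃ m : ℕ, ∀ n ≥ m, x n = x m} := by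
      refine ⟨n + 1, fun j hj => ?_⟩
      simp only [hq]
      rw [if_neg (by omega), if_neg (by omega)]
    have himg := hinv q hqQ
    have : Fmap x y w = fun i => xor (w i) (q i) := funext fun k => Fmap_apply x y w h k
    rw [this, ← himg]
    exact Set.mem_image_of_mem _ hw

/-- If `X ⊆ 2^ω` satisfies `h_q[X] = X` for every eventually constant `q`
(where `h_q(x) = x + q` mod 2), then `X` is homogeneous: for every pair of points
`x, y ∈ X` there is a homeomorphism of `X` onto itself mapping `x` to `y`. -/
theorem invariant_under_Q_translations_implies_homogeneous
    (X : Set (ℕ → Bool))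
    (hinv : ∀ q ∈ {x : ℕ → Bool | ∃ m : ℕ, ∀ n ≥ m, x n = x m},
      (fun x : ℕ → Bool => fun n => xor (x n) (q n)) '' X = X) :
    ∀ x y : X, ∃ h : X ≃ₜ X, h x = y := by
  rintro ⟨x, hx⟩ ⟨y, hy⟩
  refine ⟨{ toFun := fun w => ⟨Fmap x y w.1, Fmap_mem X hinv hy w.1 w.2⟩
            invFun := fun w => ⟨Fmap y x w.1, Fmap_mem X hinv hx w.1 w.2⟩
            left_inv := fun w => Subtype.ext (Fmap_inv x y w.1)
            right_inv := fun w => Subtype.ext (Fmap_inv y x w.1)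
            continuous_toFun :=
              Continuous.subtype_mk ((Fmap_continuous x y).comp continuous_subtype_val) _
            continuous_invFun :=
              Continuous.subtype_mk ((Fmap_continuous y x).comp continuous_subtype_val) _ },
    Subtype.ext (Fmap_self x y)⟩
end

section
/- Let V be the countable group of translations of 2^ω by eventually constant sequences. There exists a countable dense subset D of 2^ω such that D ∩ Q = ∅ and h[D] ∩ D = ∅ for every h ∈ V other than the identity. -/
private def dd (L : List Bool) : ℕ → Bool :=
  fun n => L.getD n (Nat.testBit n (Encodable.encode L))

private lemma bit_attains (k : ℕ) (b : Bool) (m : ℕ) :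
    ∃ n ≥ m, Nat.testBit n k = b := by
  set t := m + k + 1 with ht
  have hmt : m ≤ 2 ^ t := le_trans (by omega) (Nat.le_of_lt (Nat.lt_two_pow_self (n := t)))
  cases b with
  | false => exact ⟨2 ^ t, hmt, Nat.testBit_two_pow_of_ne (by omega)⟩
  | true =>
    refine ⟨2 ^ t + 2 ^ k, le_trans hmt (Nat.le_add_right _ _), ?_⟩
    rw [Nat.testBit_two_pow_add_gt (by omega), Nat.testBit_two_pow_self]

/-- xor of bits k and j of a number is not eventually constant when k ≠ j. -/
private lemma bits_not_eventually (k j : ℕ) (hkj : k ≠ j) (m : ℕ) :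
    ∃ n₁ ≥ m, ∃ n₂ ≥ m,
      xor (Nat.testBit n₁ k) (Nat.testBit n₁ j) = true ∧
      xor (Nat.testBit n₂ k) (Nat.testBit n₂ j) = false := by
  set t := m + k + j + 1 with ht
  have hmt : m ≤ 2 ^ t := le_trans (by omega) (Nat.le_of_lt (Nat.lt_two_pow_self (n := t)))
  refine ⟨2 ^ t + 2 ^ k, le_trans hmt (Nat.le_add_right _ _), 2 ^ t, hmt, ?_, ?_⟩
  · have h1 : Nat.testBit (2 ^ t + 2 ^ k) k = true := by
      rw [Nat.testBit_two_pow_add_gt (by omega), Nat.testBit_two_pow_self]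
    have h2 : Nat.testBit (2 ^ t + 2 ^ k) j = false := by
      rw [Nat.testBit_two_pow_add_gt (by omega), Nat.testBit_two_pow_of_ne hkj]
    simp [h1, h2]
  · simp [Nat.testBit_two_pow_of_ne (show t ≠ k by omega),
      Nat.testBit_two_pow_of_ne (show t ≠ j by omega)]

/-- There exists a countable dense subset `D` of `2^ω` disjoint from the set `Q` of
eventually constant sequences such that `h_q[D] ∩ D = ∅` for every translation `h_q`
(`q ∈ Q`, `h_q(x) = x + q` mod 2) other than the identity, i.e. for every nonzero `q ∈ Q`. -/
theorem exists_dense_set_disjoint_from_its_Q_translates :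
    ∃ D : Set (ℕ → Bool), D.Countable ∧ Dense D ∧
      D ∩ {x : ℕ → Bool | ∃ m : ℕ, ∀ n ≥ m, x n = x m} = ∅ ∧
      ∀ q ∈ {x : ℕ → Bool | ∃ m : ℕ, ∀ n ≥ m, x n = x m},
        q ≠ (fun _ => false) →
        ((fun x : ℕ → Bool => fun n => xor (x n) (q n)) '' D) ∩ D = ∅ := by
  refine ⟨Set.range dd, Set.countable_range _, ?_, ?_, ?_⟩
  · -- dense
    rw [dense_iff_inter_open]
    intro U hU ⟨x, hx⟩
    obtain ⟨I, u, hu, hsub⟩ := (isOpen_pi_iff.mp hU) x hx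
    obtain ⟨N, hN⟩ := I.bddAbove
    set L : List Bool := List.ofFn (fun i : Fin (N + 1) => x i) with hL
    refine ⟨dd L, hsub ?_, ⟨L, rfl⟩⟩
    intro i hi
    have hiN : i < N + 1 := Nat.lt_succ_of_le (hN hi)
    have : dd L i = x i := by
      show L.getD i _ = x i
      rw [List.getD_eq_getElem _ _ (by simpa [hL] using hiN), List.getElem_ofFn]
    rw [this]
    exact (hu i hi).2
  · -- disjoint from Q
    ext x
    simp only [Set.mem_inter_iff, Set.mem_empty_iff_false, iff_false, Set.mem_range,
      Set.mem_setOf_eq, not_and]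
    rintro ⟨L, rfl⟩ ⟨m, hm⟩
    set k := Encodable.encode L with hk
    obtain ⟨n, hn, hb⟩ := bit_attains k (!(dd L m)) (m + L.length)
    have e : dd L n = Nat.testBit n k := by
      simp [dd, List.getD_eq_getElem?_getD, List.getElem?_eq_none (by omega : L.length ≤ n), hk]
    have hv : dd L n = dd L m := hm n (by omega)
    rw [e, hb] at hv
    simp at hv
  · -- translates disjoint
    intro q ⟨m, hm⟩ hq0
    ext x
    simp only [Set.mem_inter_iff, Set.mem_empty_iff_false, iff_false, Set.mem_image,
      Set.mem_range, not_and]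
    rintro ⟨y, ⟨L, rfl⟩, rfl⟩ ⟨M, hM⟩
    have hq : ∀ n, q n = xor (dd L n) (dd M n) := by
      intro n
      have := congrFun hM n
      rw [this]
      cases dd L n <;> cases q n <;> rfl
    by_cases hLM : L = M
    · subst hLM
      apply hq0
      funext n
      rw [hq n]
      simp
    · have hcode : Encodable.encode L ≠ Encodable.encode M :=
        fun h => hLM (Encodable.encode_injective h)
      set m' := m + L.length + M.length with hm'
      obtain ⟨n₁, hn₁, n₂, hn₂, h1, h2⟩ :=
        bits_not_eventually (Encodable.encode L) (Encodable.encode M) hcode m'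
      have e : ∀ n ≥ m', q n =
          xor (Nat.testBit n (Encodable.encode L)) (Nat.testBit n (Encodable.encode M)) := by
        intro n hn
        rw [hq n]
        simp [dd, List.getD_eq_getElem?_getD,
          List.getElem?_eq_none (by omega : L.length ≤ n),
          List.getElem?_eq_none (by omega : M.length ≤ n)]
      have hv1 : q n₁ = q m := hm n₁ (by omega)
      have hv2 : q n₂ = q m := hm n₂ (by omega)
      rw [e n₁ hn₁, h1] at hv1
      rw [e n₂ hn₂, h2] at hv2
      rw [← hv1] at hv2
      simp at hv2
end
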